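/- Let x ∈ X and let u ∈ W₀ be the unique element of minimal length ℓ(x) = #{α ∈ R⁺ : (x,α∨) < 0} such that u(x) is dominant. Then ℓ(u e^x) = ℓ(e^x) − ℓ(x) in the extended affine Weyl group. -/

import Mathlib

/-! A reduced based root datum.  Since `X` and `X∨` are free abelian groups of
finite rank in perfect duality, we may take `X = X∨ = ℤ^d` with the standard
perfect pairing. -/

/-- The lattice `X ≅ X∨ ≅ ℤ^d`. -/
abbrev ZLat (d : ℕ) := Fin d → ℤ

/-- The perfect pairing `( , ) : X × X∨ → ℤ`. -/
def pairing {d : ℕ} (x y : ZLat d) : ℤ := ∑ i, x i * y i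

/-- A reduced based root datum `(X, X∨, R, R∨, B)` with `X = X∨ = ℤ^d`:
a finite set `R` of roots, a coroot map `α ↦ α∨`, and a base `B ⊆ R`. -/
structure BasedRootDatum (d : ℕ) where
  /-- the (finite) set of roots -/
  R : Finset (ZLat d)
  /-- the coroot `α∨` associated to a root `α` -/
  coroot : ZLat d → ZLat d
  /-- the base -/
  B : Finset (ZLat d)
  B_subset : B ⊆ R
  pair_self : ∀ α ∈ R, pairing α (coroot α) = 2
  reduced : ∀ α ∈ R, ∀ c : ℤ, c • α ∈ R → c = 1 ∨ c = -1
  refl_stable : ∀ α ∈ R, ∀ β ∈ R, β - pairing β (coroot α) • α ∈ R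
  corefl_stable : ∀ α ∈ R, ∀ β ∈ R,
    coroot β - pairing α (coroot β) • coroot α ∈ R.image coroot
  base : ∀ α ∈ R,
    (∃ c : ZLat d → ℕ, α = ∑ b ∈ B, (c b : ℤ) • b) ∨
    (∃ c : ZLat d → ℕ, α = -∑ b ∈ B, (c b : ℤ) • b)

namespace BasedRootDatum

variable {d : ℕ} (rd : BasedRootDatum d)

open Classical in
/-- The set `R⁺` of positive roots. -/
noncomputable def posRoots : Finset (ZLat d) :=
  rd.R.filter (fun α => ∃ c : ZLat d → ℕ, α = ∑ b ∈ rd.B, (c b : ℤ) • b)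

open Classical in
/-- The set `R⁻` of negative roots. -/
noncomputable def negRoots : Finset (ZLat d) :=
  rd.R.filter (fun α => ∃ c : ZLat d → ℕ, α = -∑ b ∈ rd.B, (c b : ℤ) • b)

/-- The finite Weyl group `W₀`, generated by the reflections
`s_α : x ↦ x − (x,α∨)α` for `α ∈ R`, realized as a subgroup of the
permutations of the lattice. -/
def weylGroup : Subgroup (Equiv.Perm (ZLat d)) :=
  Subgroup.closure {w | ∃ α ∈ rd.R, ∀ x, w x = x - pairing x (rd.coroot α) • α}

/-- The length `ℓ(w) = #{α ∈ R⁺ : w(α) ∈ R⁻}` on the finite Weyl group. -/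
noncomputable def len0 (w : Equiv.Perm (ZLat d)) : ℕ :=
  (rd.posRoots.filter (fun α => w α ∈ rd.negRoots)).card

/-- The Iwahori–Matsumoto length of `w₀ e^x` in the extended affine Weyl group
`W = W₀ · e^X`:
`ℓ(w₀e^x) = Σ_{α∈R⁺, w₀(α)∈R⁺} |(x,α∨)| + Σ_{α∈R⁺, w₀(α)∈R⁻} |1+(x,α∨)|`. -/
noncomputable def lenAff (w : Equiv.Perm (ZLat d)) (x : ZLat d) : ℕ :=
  ∑ α ∈ rd.posRoots.filter (fun α => w α ∈ rd.posRoots),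
      (pairing x (rd.coroot α)).natAbs +
  ∑ α ∈ rd.posRoots.filter (fun α => w α ∈ rd.negRoots),
      (1 + pairing x (rd.coroot α)).natAbs

/-- `x ∈ X` is dominant if `(x,β∨) ≥ 0` for every simple root `β ∈ B`. -/
def IsDominant (x : ZLat d) : Prop := ∀ β ∈ rd.B, 0 ≤ pairing x (rd.coroot β)

end BasedRootDatum

section PairingLemmas

variable {d : ℕ}

lemma pairing_add_left (x y z : ZLat d) : pairing (x + y) z = pairing x z + pairing y z := by
  simp [pairing, add_mul, Finset.sum_add_distrib]

lemma pairing_smul_left (c : ℤ) (x z : ZLat d) : pairing (c • x) z = c * pairing x z := by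
  simp [pairing, Finset.mul_sum, mul_assoc]

lemma pairing_neg_left (x z : ZLat d) : pairing (-x) z = -pairing x z := by
  simp [pairing, Finset.sum_neg_distrib]

lemma pairing_sub_left (x y z : ZLat d) : pairing (x - y) z = pairing x z - pairing y z := by
  rw [sub_eq_add_neg, pairing_add_left, pairing_neg_left, sub_eq_add_neg]

lemma pairing_add_right (x y z : ZLat d) : pairing x (y + z) = pairing x y + pairing x z := by
  simp [pairing, mul_add, Finset.sum_add_distrib]

lemma pairing_smul_right (c : ℤ) (x z : ZLat d) : pairing x (c • z) = c * pairing x z := by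
  simp [pairing, Finset.mul_sum]; apply Finset.sum_congr rfl; intros; ring

lemma pairing_neg_right (x z : ZLat d) : pairing x (-z) = -pairing x z := by
  simp [pairing]

lemma pairing_sub_right (x y z : ZLat d) : pairing x (y - z) = pairing x y - pairing x z := by
  rw [sub_eq_add_neg, pairing_add_right, pairing_neg_right, sub_eq_add_neg]

lemma pairing_zero_left (z : ZLat d) : pairing 0 z = 0 := by simp [pairing]

lemma pairing_sum_left {ι : Type*} (s : Finset ι) (f : ι → ZLat d) (z : ZLat d) :
    pairing (∑ i ∈ s, f i) z = ∑ i ∈ s, pairing (f i) z := by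
  classical
  induction s using Finset.induction with
  | empty => simp [pairing_zero_left]
  | @insert a s h ih => rw [Finset.sum_insert h, Finset.sum_insert h, pairing_add_left, ih]

end PairingLemmas

namespace BRD14

open BasedRootDatum

variable {d : ℕ} (rd : BasedRootDatum d)

lemma no_inj_seq (f : ℕ → ZLat d) (hf : ∀ n, f n ∈ rd.R) (hinj : Function.Injective f) :
    False := by
  exact (Set.infinite_range_of_injective hinj)
    (rd.R.finite_toSet.subset (by rintro _ ⟨n, rfl⟩; exact hf n))

lemma neg_mem {α : ZLat d} (hα : α ∈ rd.R) : -α ∈ rd.R := by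
  have h := rd.refl_stable α hα α hα
  rw [rd.pair_self α hα] at h
  have : α - (2:ℤ) • α = -α := by module
  rwa [this] at h

lemma coroot_unique {δ₁ δ₂ : ZLat d} (h1 : δ₁ ∈ rd.R) (h2 : δ₂ ∈ rd.R) (q : ZLat d)
    (hq1 : pairing δ₁ q = 2) (hq2 : pairing δ₂ q = 2)
    (st1 : ∀ β ∈ rd.R, β - pairing β q • δ₁ ∈ rd.R)
    (st2 : ∀ β ∈ rd.R, β - pairing β q • δ₂ ∈ rd.R) : δ₁ = δ₂ := by
  by_contra hne
  set v := δ₁ - δ₂ with hv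
  have hvne : v ≠ 0 := sub_ne_zero.2 hne
  have key : ∀ n : ℕ, δ₁ + ((2 * n : ℤ)) • v ∈ rd.R := by
    intro n
    induction n with
    | zero => simpa using h1
    | succ n ih =>
      have hp : pairing (δ₁ + (2 * (n:ℤ)) • v) q = 2 := by
        rw [pairing_add_left, pairing_smul_left, hv, pairing_sub_left, hq1, hq2]
        ring
      have m2 := st2 _ ih
      rw [hp] at m2
      have hp2 : pairing (δ₁ + (2 * (n:ℤ)) • v - (2:ℤ) • δ₂) q = -2 := by
        rw [pairing_sub_left, pairing_smul_left, hp, hq2]; ring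
      have m1 := st1 _ m2
      rw [hp2] at m1
      have hcast : (2 * ((n+1 : ℕ) : ℤ)) = 2 * (n:ℤ) + 2 := by push_cast; ring
      have : δ₁ + (2 * (n:ℤ)) • v - (2:ℤ) • δ₂ - (-2 : ℤ) • δ₁
          = δ₁ + (2 * (n:ℤ) + 2) • v := by rw [hv]; module
      rw [this] at m1
      rw [hcast]
      exact m1
  apply no_inj_seq rd (fun n => δ₁ + ((2 * n : ℤ)) • v) key
  intro a b hab
  have h' : ((2 * a : ℤ) - (2 * b : ℤ)) • v = 0 := by
    rw [sub_smul]
    have := add_left_cancel hab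
    rw [this]; abel
  rcases smul_eq_zero.1 h' with h0 | h0
  · have : (a : ℤ) = b := by omega
    exact_mod_cast this
  · exact absurd h0 hvne

lemma coroot_reflect {α β : ZLat d} (hα : α ∈ rd.R) (hβ : β ∈ rd.R) :
    rd.coroot (β - pairing β (rd.coroot α) • α) =
      rd.coroot β - pairing α (rd.coroot β) • rd.coroot α := by
  set m := pairing β (rd.coroot α) with hm
  set k := pairing α (rd.coroot β) with hk
  set q := rd.coroot β - k • rd.coroot α with hq
  have hδ₁ : β - m • α ∈ rd.R := rd.refl_stable α hα β hβ
  obtain ⟨γ, hγR, hγq0⟩ := Finset.mem_image.1 (rd.corefl_stable α hα β hβ)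
  have hγq : rd.coroot γ = q := by rw [hq, hk]; exact hγq0
  suffices hsuff : β - m • α = γ by rw [hsuff, hγq, hq]
  have hzq : ∀ z : ZLat d, pairing z q = pairing z (rd.coroot β) - k * pairing z (rd.coroot α) := by
    intro z; rw [hq, pairing_sub_right, pairing_smul_right]
  apply coroot_unique rd hδ₁ hγR q
  · rw [hzq, pairing_sub_left, pairing_sub_left, pairing_smul_left, pairing_smul_left,
      rd.pair_self β hβ, ← hm, ← hk, rd.pair_self α hα]
    ring
  · rw [← hγq]; exact rd.pair_self γ hγR
  · -- stability of the reflection with root β - m•α and "coroot" q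
    intro z hz
    have A := pairing z (rd.coroot α)
    have h1 : z - pairing z (rd.coroot α) • α ∈ rd.R := rd.refl_stable α hα z hz
    have h2 := rd.refl_stable β hβ _ h1
    have e1 : pairing (z - pairing z (rd.coroot α) • α) (rd.coroot β)
        = pairing z (rd.coroot β) - pairing z (rd.coroot α) * k := by
      rw [pairing_sub_left, pairing_smul_left, ← hk]
    rw [e1] at h2
    have h3 := rd.refl_stable α hα _ h2
    have e2 : pairing (z - pairing z (rd.coroot α) • α -
        (pairing z (rd.coroot β) - pairing z (rd.coroot α) * k) • β) (rd.coroot α)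
        = pairing z (rd.coroot α) - pairing z (rd.coroot α) * 2
          - (pairing z (rd.coroot β) - pairing z (rd.coroot α) * k) * m := by
      rw [pairing_sub_left, pairing_sub_left, pairing_smul_left, pairing_smul_left,
        rd.pair_self α hα, ← hm]
    rw [e2] at h3
    have e3 : z - pairing z q • (β - m • α)
        = z - pairing z (rd.coroot α) • α -
            (pairing z (rd.coroot β) - pairing z (rd.coroot α) * k) • β -
          (pairing z (rd.coroot α) - pairing z (rd.coroot α) * 2
            - (pairing z (rd.coroot β) - pairing z (rd.coroot α) * k) * m) • α := by
      rw [hzq]; module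
    rwa [e3]
  · intro z hz
    rw [← hγq]
    exact rd.refl_stable γ hγR z hz

lemma coroot_neg {α : ZLat d} (hα : α ∈ rd.R) : rd.coroot (-α) = -rd.coroot α := by
  have h := coroot_reflect rd hα hα
  rw [rd.pair_self α hα] at h
  have e1 : α - (2:ℤ) • α = -α := by module
  have e2 : rd.coroot α - (2:ℤ) • rd.coroot α = -rd.coroot α := by module
  rwa [e1, e2] at h


/-- The package of properties of elements of the Weyl group that we need. -/
def Good (rd : BasedRootDatum d) (w : Equiv.Perm (ZLat d)) : Prop :=
  (∀ (c : ℤ) (z : ZLat d), w (c • z) = c • w z) ∧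
  (∀ z₁ z₂ : ZLat d, w (z₁ + z₂) = w z₁ + w z₂) ∧
  (∀ α ∈ rd.R, w α ∈ rd.R ∧
    ∀ z : ZLat d, pairing (w z) (rd.coroot (w α)) = pairing z (rd.coroot α))

lemma good_one : Good rd 1 := by
  refine ⟨fun c z => rfl, fun z₁ z₂ => rfl, fun α hα => ⟨hα, fun z => rfl⟩⟩

lemma good_mul {w v : Equiv.Perm (ZLat d)} (hw : Good rd w) (hv : Good rd v) :
    Good rd (w * v) := by
  obtain ⟨hw1, hw2, hw3⟩ := hw
  obtain ⟨hv1, hv2, hv3⟩ := hv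
  refine ⟨fun c z => ?_, fun z₁ z₂ => ?_, fun α hα => ?_⟩
  · simp only [Equiv.Perm.mul_apply, hv1, hw1]
  · simp only [Equiv.Perm.mul_apply, hv2, hw2]
  · obtain ⟨hvα, hvp⟩ := hv3 α hα
    obtain ⟨hwα, hwp⟩ := hw3 _ hvα
    exact ⟨hwα, fun z => by simp only [Equiv.Perm.mul_apply]; rw [hwp, hvp]⟩

lemma good_gen {α : ZLat d} (hα : α ∈ rd.R) (w : Equiv.Perm (ZLat d))
    (hw : ∀ z, w z = z - pairing z (rd.coroot α) • α) : Good rd w := by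
  refine ⟨fun c z => ?_, fun z₁ z₂ => ?_, fun β hβ => ⟨?_, fun z => ?_⟩⟩
  · rw [hw, hw, pairing_smul_left]; module
  · rw [hw, hw, hw, pairing_add_left]; module
  · rw [hw]; exact rd.refl_stable α hα β hβ
  · rw [hw, hw, coroot_reflect rd hα hβ]
    rw [pairing_sub_left, pairing_sub_right, pairing_sub_right,
      pairing_smul_left, pairing_smul_right, pairing_smul_right,
      pairing_smul_left, rd.pair_self α hα]
    ring

lemma gen_invol {α : ZLat d} (hα : α ∈ rd.R) (w : Equiv.Perm (ZLat d))
    (hw : ∀ z, w z = z - pairing z (rd.coroot α) • α) : w⁻¹ = w := by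
  have hmul : w * w = 1 := by
    apply Equiv.ext
    intro z
    simp only [Equiv.Perm.mul_apply, Equiv.Perm.one_apply]
    rw [hw, hw, pairing_sub_left, pairing_smul_left, rd.pair_self α hα]
    module
  exact inv_eq_of_mul_eq_one_right hmul

lemma good_of_mem {u : Equiv.Perm (ZLat d)} (hu : u ∈ rd.weylGroup) :
    Good rd u ∧ Good rd u⁻¹ := by
  refine Subgroup.closure_induction
    (p := fun w _ => Good rd w ∧ Good rd w⁻¹) ?_ ?_ ?_ ?_ hu
  · rintro w ⟨α, hα, hw⟩
    have hg := good_gen rd hα w hw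
    rw [gen_invol rd hα w hw]
    exact ⟨hg, hg⟩
  · exact ⟨good_one rd, by rw [inv_one]; exact good_one rd⟩
  · rintro x y hx hy ⟨hx1, hx2⟩ ⟨hy1, hy2⟩
    exact ⟨good_mul rd hx1 hy1, by rw [mul_inv_rev]; exact good_mul rd hy2 hx2⟩
  · rintro x hx ⟨hx1, hx2⟩
    exact ⟨hx2, by rw [inv_inv]; exact hx1⟩

lemma root_ne_zero {α : ZLat d} (hα : α ∈ rd.R) : α ≠ 0 := by
  intro h
  have := rd.pair_self α hα
  rw [h, pairing_zero_left] at this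
  exact absurd this (by norm_num)

lemma growth_aux {τ : ℤ} (hτ : 2 ≤ |τ|) (b : ℕ → ℤ) (hb0 : b 0 = 0) (hb1 : b 1 ≠ 0)
    (hrec : ∀ n, b (n + 2) = τ * b (n + 1) - b n) :
    ∀ n, |b n| < |b (n + 1)| := by
  intro n
  induction n with
  | zero => rw [hb0]; simpa using hb1
  | succ n ih =>
    have h1 : |τ * b (n+1)| = |τ| * |b (n+1)| := abs_mul _ _
    have h2 : |τ * b (n+1)| - |b n| ≤ |τ * b (n+1) - b n| := by
      have := abs_sub_abs_le_abs_sub (τ * b (n+1)) (b n)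
      linarith
    rw [hrec n]
    nlinarith [abs_nonneg (b n), abs_nonneg (b (n+1))]

lemma seq_injective {τ : ℤ} (hτ : 2 ≤ |τ|) (b : ℕ → ℤ) (hb0 : b 0 = 0) (hb1 : b 1 ≠ 0)
    (hrec : ∀ n, b (n + 2) = τ * b (n + 1) - b n) : Function.Injective b := by
  have habs : StrictMono (fun n => |b n|) :=
    strictMono_nat_of_lt_succ (growth_aux hτ b hb0 hb1 hrec)
  intro n p h
  by_contra hne
  rcases lt_or_gt_of_ne hne with h' | h'
  · exact absurd (congrArg abs h) (ne_of_lt (habs h'))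
  · exact absurd (congrArg abs h) (ne_of_gt (habs h'))

lemma Lstar {α β : ZLat d} (hα : α ∈ rd.R) (hβ : β ∈ rd.R) (hne : α ≠ β) (hne' : α ≠ -β)
    {k m : ℤ} (hkdef : pairing α (rd.coroot β) = k) (hmdef : pairing β (rd.coroot α) = m)
    (hk : k ≠ 0) :
    1 ≤ k * m ∧ k * m ≤ 3 := by
  by_contra hcon
  push_neg at hcon
  have hτ : 2 ≤ |k * m - 2| := by
    rcases lt_or_ge (k*m) 1 with h | h
    · rw [abs_sub_comm, abs_of_nonneg (by omega)]; omega
    · have := hcon h; rw [abs_of_nonneg (by omega)]; omega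
  by_cases hdep : ∃ r s : ℤ, ¬(r = 0 ∧ s = 0) ∧ r • β = s • α
  · -- dependent case
    obtain ⟨r, s, hrs, hre⟩ := hdep
    have hr : r ≠ 0 := by
      rintro rfl
      rw [zero_smul] at hre
      rcases smul_eq_zero.1 hre.symm with h | h
      · exact hrs ⟨rfl, h⟩
      · exact root_ne_zero rd hα h
    have hs : s ≠ 0 := by
      rintro rfl
      rw [zero_smul] at hre
      rcases smul_eq_zero.1 hre with h | h
      · exact hrs ⟨h, rfl⟩
      · exact root_ne_zero rd hβ h
    have e1 : r * 2 = s * k := by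
      have h : pairing (r • β) (rd.coroot β) = pairing (s • α) (rd.coroot β) := by rw [hre]
      rwa [pairing_smul_left, pairing_smul_left, rd.pair_self β hβ, hkdef] at h
    have e2 : r * m = s * 2 := by
      have h : pairing (r • β) (rd.coroot α) = pairing (s • α) (rd.coroot α) := by rw [hre]
      rwa [pairing_smul_left, pairing_smul_left, rd.pair_self α hα, hmdef] at h
    have hkm4 : k * m = 4 := by
      have h4 : s * (k * m - 4) = 0 := by linear_combination 2 * e2 - m * e1
      rcases mul_eq_zero.1 h4 with h | h
      · exact absurd h hs
      · omega
    have hdvd : k ∣ 4 := ⟨m, hkm4.symm⟩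
    have hk4 : |k| ≤ 4 := Int.le_of_dvd (by norm_num) ((abs_dvd k 4).2 hdvd)
    obtain ⟨hlb, hub⟩ := abs_le.1 hk4
    have hred := rd.reduced
    interval_cases k
    · -- k = -4, m = -1
      have hm : m = -1 := by omega
      subst hm
      have hrs2 : r = -2 * s := by omega
      rw [hrs2] at hre
      have hx : α = (-2 : ℤ) • β := by
        have : s • ((-2:ℤ) • β) = s • α := by rw [← hre]; module
        exact (smul_right_injective (ZLat d) hs this).symm
      rw [hx] at hα
      rcases rd.reduced β hβ (-2) hα with h | h <;> omega
    · -- k = -3 impossible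
      omega
    · -- k = -2, m = -2
      have hm : m = -2 := by omega
      subst hm
      have hrs2 : r = -s := by omega
      rw [hrs2] at hre
      have hx : α = -β := by
        have : s • (-β) = s • α := by rw [← hre]; module
        exact (smul_right_injective (ZLat d) hs this).symm
      exact hne' hx
    · -- k = -1, m = -4
      have hm : m = -4 := by omega
      subst hm
      have hrs2 : s = -2 * r := by omega
      rw [hrs2] at hre
      have hx : β = (-2 : ℤ) • α := by
        have : r • ((-2:ℤ) • α) = r • β := by rw [hre]; module
        exact (smul_right_injective (ZLat d) hr this).symm
      rw [hx] at hβ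
      rcases rd.reduced α hα (-2) hβ with h | h <;> omega
    · exact hk rfl
    · -- k = 1, m = 4
      have hm : m = 4 := by omega
      subst hm
      have hrs2 : s = 2 * r := by omega
      rw [hrs2] at hre
      have hx : β = (2 : ℤ) • α := by
        have : r • ((2:ℤ) • α) = r • β := by rw [hre]; module
        exact (smul_right_injective (ZLat d) hr this).symm
      rw [hx] at hβ
      rcases rd.reduced α hα 2 hβ with h | h <;> omega
    · -- k = 2, m = 2
      have hm : m = 2 := by omega
      subst hm
      have hrs2 : r = s := by omega
      rw [hrs2] at hre
      have hx : α = β := by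
        have : s • β = s • α := by rw [← hre]
        exact (smul_right_injective (ZLat d) hs this).symm
      exact hne hx
    · -- k = 3 impossible
      omega
    · -- k = 4, m = 1
      have hm : m = 1 := by omega
      subst hm
      have hrs2 : r = 2 * s := by omega
      rw [hrs2] at hre
      have hx : α = (2 : ℤ) • β := by
        have : s • ((2:ℤ) • β) = s • α := by rw [← hre]; module
        exact (smul_right_injective (ZLat d) hs this).symm
      rw [hx] at hα
      rcases rd.reduced β hβ 2 hα with h | h <;> omega
  · -- independent case
    push_neg at hdep
    have hindep : ∀ r s : ℤ, r • β = s • α → r = 0 ∧ s = 0 := by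
      intro r s h
      by_contra hc
      exact hdep r s (by tauto) h
    set F : ℕ → ℤ × ℤ :=
      fun n => Nat.rec ((1:ℤ), (0:ℤ))
        (fun _ p => (-p.1 - m * p.2, k * p.1 + (k * m - 1) * p.2)) n with hF
    have hF0 : F 0 = (1, 0) := rfl
    have hFstep : ∀ n, F (n+1) = (-(F n).1 - m * (F n).2,
        k * (F n).1 + (k * m - 1) * (F n).2) := fun n => rfl
    have hzR : ∀ n, (F n).1 • α + (F n).2 • β ∈ rd.R := by
      intro n
      induction n with
      | zero => rw [hF0]; simpa using hα
      | succ n ih =>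
        have hpα : pairing ((F n).1 • α + (F n).2 • β) (rd.coroot α)
            = (F n).1 * 2 + (F n).2 * m := by
          rw [pairing_add_left, pairing_smul_left, pairing_smul_left,
            rd.pair_self α hα, hmdef]
        have h1 := rd.refl_stable α hα _ ih
        rw [hpα] at h1
        have e1 : (F n).1 • α + (F n).2 • β - ((F n).1 * 2 + (F n).2 * m) • α
            = (-(F n).1 - m*(F n).2) • α + (F n).2 • β := by module
        rw [e1] at h1
        have hpβ : pairing ((-(F n).1 - m*(F n).2) • α + (F n).2 • β) (rd.coroot β)
            = (-(F n).1 - m*(F n).2) * k + (F n).2 * 2 := by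
          rw [pairing_add_left, pairing_smul_left, pairing_smul_left,
            rd.pair_self β hβ, hkdef]
        have h2 := rd.refl_stable β hβ _ h1
        rw [hpβ] at h2
        have e2 : (-(F n).1 - m*(F n).2) • α + (F n).2 • β
              - ((-(F n).1 - m*(F n).2) * k + (F n).2 * 2) • β
            = (-(F n).1 - m*(F n).2) • α + (k*(F n).1 + (k*m-1)*(F n).2) • β := by module
        rw [e2] at h2
        rw [hFstep n]
        exact h2
    have hrec : ∀ n, (F (n+2)).2 = (k*m - 2) * (F (n+1)).2 - (F n).2 := by
      intro n
      show (F (n+1+1)).2 = _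
      rw [hFstep (n+1), hFstep n]
      dsimp only
      ring
    have hb1 : (F 1).2 ≠ 0 := by
      have h : (F 1).2 = k * 1 + (k * m - 1) * 0 := rfl
      rw [h]
      simpa using hk
    have hinjb : Function.Injective (fun n => (F n).2) :=
      seq_injective hτ _ (by rw [hF0]) hb1 hrec
    have hinj : Function.Injective (fun n => (F n).1 • α + (F n).2 • β) := by
      intro n p h
      simp only at h
      have h0 : ((F n).2 - (F p).2) • β - ((F p).1 - (F n).1) • α = 0 := by
        have h' := sub_eq_zero.2 h
        rw [show (F n).1 • α + (F n).2 • β - ((F p).1 • α + (F p).2 • β)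
            = ((F n).2 - (F p).2) • β - ((F p).1 - (F n).1) • α from by module] at h'
        exact h'
      obtain ⟨h1, _⟩ := hindep _ _ (sub_eq_zero.1 h0)
      have h2 : (F n).2 = (F p).2 := by omega
      exact hinjb h2
    exact no_inj_seq rd _ hzR hinj

lemma dominant_nonneg_on_pos (y : ZLat d) (hy : ∀ b ∈ rd.B, 0 ≤ pairing y (rd.coroot b)) :
    ∀ (n : ℕ) (γ : ZLat d) (c : ZLat d → ℕ), γ ∈ rd.R →
      γ = ∑ b ∈ rd.B, (c b : ℤ) • b → (∑ b ∈ rd.B, c b) = n →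
      0 ≤ pairing y (rd.coroot γ) := by
  intro n
  induction n using Nat.strong_induction_on with
  | _ n ih =>
  intro γ c hγ hrep hsum
  classical
  have h2 : (2:ℤ) = ∑ b ∈ rd.B, (c b : ℤ) * pairing b (rd.coroot γ) := by
    calc (2:ℤ) = pairing γ (rd.coroot γ) := (rd.pair_self γ hγ).symm
      _ = pairing (∑ b ∈ rd.B, (c b : ℤ) • b) (rd.coroot γ) := by rw [← hrep]
      _ = ∑ b ∈ rd.B, pairing ((c b : ℤ) • b) (rd.coroot γ) := pairing_sum_left _ _ _
      _ = ∑ b ∈ rd.B, (c b : ℤ) * pairing b (rd.coroot γ) := by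
          exact Finset.sum_congr rfl (fun b _ => pairing_smul_left _ _ _)
  have hexists : ∃ b ∈ rd.B, 1 ≤ c b ∧ 1 ≤ pairing b (rd.coroot γ) := by
    by_contra hno
    push_neg at hno
    have hle : ∑ b ∈ rd.B, (c b : ℤ) * pairing b (rd.coroot γ) ≤ 0 := by
      apply Finset.sum_nonpos
      intro b hb
      rcases Nat.eq_zero_or_pos (c b) with h0 | h0
      · rw [h0]; simp
      · have := hno b hb h0
        have hcnn : (0:ℤ) ≤ (c b : ℤ) := Int.natCast_nonneg _
        exact mul_nonpos_of_nonneg_of_nonpos hcnn (by omega)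
    omega
  obtain ⟨b, hbB, hcb, hkpos⟩ := hexists
  have hbR := rd.B_subset hbB
  by_cases hγb : γ = b
  · rw [hγb]; exact hy b hbB
  by_cases hγnb : γ = -b
  · exfalso
    rw [hγnb, coroot_neg rd hbR, pairing_neg_right, rd.pair_self b hbR] at hkpos
    omega
  have hne1 : b ≠ γ := fun h => hγb h.symm
  have hne2 : b ≠ -γ := by
    intro h
    apply hγnb
    rw [h]; module
  obtain ⟨hlow, hhigh⟩ := Lstar rd hbR hγ hne1 hne2
    (k := pairing b (rd.coroot γ)) (m := pairing γ (rd.coroot b)) rfl rfl (by omega)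
  have hm1 : 1 ≤ pairing γ (rd.coroot b) := by nlinarith
  -- the new representation of γ - b
  set c' : ZLat d → ℕ := fun v => if v = b then c b - 1 else c v with hc'
  have hrep' : γ - b = ∑ v ∈ rd.B, (c' v : ℤ) • v := by
    have step : ∀ v ∈ rd.B, (c' v : ℤ) • v = (c v : ℤ) • v - (if v = b then b else 0) := by
      intro v hv
      by_cases hvb : v = b
      · subst hvb
        have h1 : c' v = c v - 1 := by simp [hc']
        rw [h1, if_pos rfl, Nat.cast_sub hcb]
        push_cast
        module
      · have h1 : c' v = c v := by simp [hc', hvb]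
        rw [h1, if_neg hvb, sub_zero]
    rw [Finset.sum_congr rfl step, Finset.sum_sub_distrib, Finset.sum_ite_eq' rd.B b (fun _ => b),
      if_pos hbB, hrep]
  have hsum' : (∑ v ∈ rd.B, c v) = (∑ v ∈ rd.B, c' v) + 1 := by
    have step : ∀ v ∈ rd.B, c v = c' v + (if v = b then 1 else 0) := by
      intro v hv
      by_cases hvb : v = b
      · subst hvb
        have h1 : c' v = c v - 1 := by simp [hc']
        rw [h1, if_pos rfl]
        omega
      · have h1 : c' v = c v := by simp [hc', hvb]
        rw [h1, if_neg hvb]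
        omega
    rw [Finset.sum_congr rfl step, Finset.sum_add_distrib,
      Finset.sum_ite_eq' rd.B b (fun _ => 1), if_pos hbB]
  have hlt : (∑ v ∈ rd.B, c' v) < n := by omega
  have hmin : pairing b (rd.coroot γ) = 1 ∨ pairing γ (rd.coroot b) = 1 := by
    by_contra hc
    push_neg at hc
    obtain ⟨ha, hb'⟩ := hc
    have : 2 ≤ pairing b (rd.coroot γ) := by omega
    have : 2 ≤ pairing γ (rd.coroot b) := by omega
    nlinarith
  have hyb := hy b hbB
  rcases hmin with hk1 | hm1'
  · -- k = 1 : use  γ - b = -(s_γ b)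
    have hmem0 : b - γ ∈ rd.R := by
      have := rd.refl_stable γ hγ b hbR
      rwa [hk1, one_smul] at this
    have hmem : γ - b ∈ rd.R := by
      have := neg_mem rd hmem0
      rwa [neg_sub] at this
    have hco0 : rd.coroot (b - γ) = rd.coroot b - pairing γ (rd.coroot b) • rd.coroot γ := by
      have := coroot_reflect rd hγ hbR
      rwa [hk1, one_smul] at this
    have hco : rd.coroot (γ - b)
        = pairing γ (rd.coroot b) • rd.coroot γ - rd.coroot b := by
      have h1 : rd.coroot (-(b - γ)) = -rd.coroot (b - γ) := coroot_neg rd hmem0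
      rw [neg_sub] at h1
      rw [h1, hco0]
      module
    have hIH := ih _ hlt (γ - b) c' hmem hrep' rfl
    rw [hco, pairing_sub_right, pairing_smul_right] at hIH
    by_contra hneg
    push_neg at hneg
    have hmneg : pairing γ (rd.coroot b) * pairing y (rd.coroot γ) < 0 :=
      mul_neg_of_pos_of_neg (by omega) hneg
    linarith
  · -- m = 1 : use γ - b = s_b γ
    have hmem : γ - b ∈ rd.R := by
      have := rd.refl_stable b hbR γ hγ
      rwa [hm1', one_smul] at this
    have hco : rd.coroot (γ - b) = rd.coroot γ - pairing b (rd.coroot γ) • rd.coroot b := by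
      have := coroot_reflect rd hbR hγ
      rwa [hm1', one_smul] at this
    have hIH := ih _ hlt (γ - b) c' hmem hrep' rfl
    rw [hco, pairing_sub_right, pairing_smul_right] at hIH
    nlinarith

open Classical in
lemma mem_pos_or_neg {α : ZLat d} (hα : α ∈ rd.R) :
    α ∈ rd.posRoots ∨ α ∈ rd.negRoots := by
  rcases rd.base α hα with h | h
  · exact Or.inl (Finset.mem_filter.2 ⟨hα, h⟩)
  · exact Or.inr (Finset.mem_filter.2 ⟨hα, h⟩)

open Classical in
lemma mem_R_of_pos {α : ZLat d} (h : α ∈ rd.posRoots) : α ∈ rd.R :=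
  (Finset.mem_filter.1 h).1

open Classical in
lemma neg_pos_mem_neg {α : ZLat d} (h : α ∈ rd.posRoots) : -α ∈ rd.negRoots := by
  obtain ⟨hR, c, hc⟩ := Finset.mem_filter.1 h
  exact Finset.mem_filter.2 ⟨neg_mem rd hR, c, by rw [hc]⟩

open Classical in
lemma neg_neg_mem_pos {α : ZLat d} (h : α ∈ rd.negRoots) : -α ∈ rd.posRoots := by
  obtain ⟨hR, c, hc⟩ := Finset.mem_filter.1 h
  exact Finset.mem_filter.2 ⟨neg_mem rd hR, c, by rw [hc, neg_neg]⟩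

open Classical in
lemma dominant_pos {y : ZLat d} (hy : rd.IsDominant y) {γ : ZLat d} (hγ : γ ∈ rd.posRoots) :
    0 ≤ pairing y (rd.coroot γ) := by
  obtain ⟨hR, c, hc⟩ := Finset.mem_filter.1 hγ
  exact dominant_nonneg_on_pos rd y hy _ γ c hR hc rfl

end BRD14


open Classical BasedRootDatum in
/-- Let `x ∈ X` and let `u ∈ W₀` be the (unique) element of minimal length
`ℓ(x) = #{α ∈ R⁺ : (x,α∨) < 0}` such that `u(x)` is dominant.  Then
`ℓ(u e^x) = ℓ(e^x) − ℓ(x)` in the extended affine Weyl group. -/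
theorem stmt_14 {d : ℕ} (rd : BasedRootDatum d) (x : ZLat d)
    (u : Equiv.Perm (ZLat d)) (hu : u ∈ rd.weylGroup)
    (hlen : rd.len0 u = (rd.posRoots.filter (fun α => pairing x (rd.coroot α) < 0)).card)
    (hdom : rd.IsDominant (u x)) :
    rd.lenAff u x +
        (rd.posRoots.filter (fun α => pairing x (rd.coroot α) < 0)).card =
      rd.lenAff 1 x := by
  obtain ⟨hGu, hGuInv⟩ := BRD14.good_of_mem rd hu
  obtain ⟨huSmul, huAdd, huR⟩ := hGu
  obtain ⟨hiSmul, hiAdd, hiR⟩ := hGuInv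
  have equiv : ∀ α ∈ rd.R, pairing (u x) (rd.coroot (u α)) = pairing x (rd.coroot α) :=
    fun α hα => (huR α hα).2 x
  have hdom' : ∀ γ ∈ rd.posRoots, 0 ≤ pairing (u x) (rd.coroot γ) :=
    fun γ hγ => BRD14.dominant_pos rd hdom hγ
  -- S ⊆ Bs
  have hSsubBs : rd.posRoots.filter (fun α => pairing x (rd.coroot α) < 0) ⊆
      rd.posRoots.filter (fun α => u α ∈ rd.negRoots) := by
    intro α hα
    obtain ⟨hp, hneg⟩ := Finset.mem_filter.1 hα
    have hαR := BRD14.mem_R_of_pos rd hp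
    rcases BRD14.mem_pos_or_neg rd ((huR α hαR).1) with hpos | hng
    · exfalso
      have h0 := hdom' (u α) hpos
      rw [equiv α hαR] at h0
      omega
    · exact Finset.mem_filter.2 ⟨hp, hng⟩
  have hcard : (rd.posRoots.filter (fun α => u α ∈ rd.negRoots)).card ≤
      (rd.posRoots.filter (fun α => pairing x (rd.coroot α) < 0)).card := by
    rw [← hlen]; rfl
  have hEq : rd.posRoots.filter (fun α => pairing x (rd.coroot α) < 0) =
      rd.posRoots.filter (fun α => u α ∈ rd.negRoots) :=
    Finset.eq_of_subset_of_card_le hSsubBs hcard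
  -- positive and negative roots are disjoint
  have hD : ∀ γ, γ ∈ rd.posRoots → γ ∈ rd.negRoots → False := by
    intro γ hp hn
    have hγR := BRD14.mem_R_of_pos rd hp
    have hαR : u⁻¹ γ ∈ rd.R := (hiR γ hγR).1
    have huu : u (u⁻¹ γ) = γ := Equiv.apply_symm_apply u γ
    rcases BRD14.mem_pos_or_neg rd hαR with hP' | hN'
    · have hmem : u⁻¹ γ ∈ rd.posRoots.filter (fun α => u α ∈ rd.negRoots) :=
        Finset.mem_filter.2 ⟨hP', by rw [huu]; exact hn⟩
      rw [← hEq] at hmem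
      have hneg := (Finset.mem_filter.1 hmem).2
      have he := equiv _ hαR
      rw [huu] at he
      have hge := hdom' γ hp
      omega
    · have hnegα : -(u⁻¹ γ) ∈ rd.posRoots := BRD14.neg_neg_mem_pos rd hN'
      have hneg1 : u (-(u⁻¹ γ)) = -γ := by
        have h := huSmul (-1) (u⁻¹ γ)
        rw [neg_one_smul, neg_one_smul, huu] at h
        exact h
      have hγn : -γ ∈ rd.negRoots := BRD14.neg_pos_mem_neg rd hp
      have hmem : -(u⁻¹ γ) ∈ rd.posRoots.filter (fun α => u α ∈ rd.negRoots) :=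
        Finset.mem_filter.2 ⟨hnegα, by rw [hneg1]; exact hγn⟩
      rw [← hEq] at hmem
      have hneg := (Finset.mem_filter.1 hmem).2
      have hR2 : -(u⁻¹ γ) ∈ rd.R := BRD14.mem_R_of_pos rd hnegα
      have he := equiv _ hR2
      rw [hneg1] at he
      have hge := hdom' (-γ) (BRD14.neg_neg_mem_pos rd hn)
      omega
  -- description of the filters occurring in lenAff u x
  have hF1 : rd.posRoots.filter (fun α => u α ∈ rd.posRoots) =
      rd.posRoots.filter (fun α => ¬ pairing x (rd.coroot α) < 0) := by
    apply Finset.ext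
    intro α
    simp only [Finset.mem_filter]
    constructor
    · rintro ⟨hp, hup⟩
      refine ⟨hp, fun hneg => ?_⟩
      have hmem : α ∈ rd.posRoots.filter (fun α => pairing x (rd.coroot α) < 0) :=
        Finset.mem_filter.2 ⟨hp, hneg⟩
      rw [hEq] at hmem
      exact hD (u α) hup (Finset.mem_filter.1 hmem).2
    · rintro ⟨hp, hnneg⟩
      refine ⟨hp, ?_⟩
      have hαR := BRD14.mem_R_of_pos rd hp
      rcases BRD14.mem_pos_or_neg rd ((huR α hαR).1) with h | h
      · exact h
      · exfalso
        have hmem : α ∈ rd.posRoots.filter (fun α => u α ∈ rd.negRoots) :=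
          Finset.mem_filter.2 ⟨hp, h⟩
        rw [← hEq] at hmem
        exact hnneg (Finset.mem_filter.1 hmem).2
  have hF2 : rd.posRoots.filter (fun α => (1 : Equiv.Perm (ZLat d)) α ∈ rd.negRoots) = ∅ :=
    Finset.filter_eq_empty_iff.2 (fun {α} hα h => hD α hα h)
  have hF3 : rd.posRoots.filter (fun α => (1 : Equiv.Perm (ZLat d)) α ∈ rd.posRoots) =
      rd.posRoots := Finset.filter_true_of_mem (fun α hα => hα)
  simp only [lenAff]
  rw [hF1, hF2, hF3, ← hEq, Finset.sum_empty, add_zero]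
  have hptw : ∀ α ∈ rd.posRoots.filter (fun α => pairing x (rd.coroot α) < 0),
      (1 + pairing x (rd.coroot α)).natAbs + 1 = (pairing x (rd.coroot α)).natAbs := by
    intro α hα
    have := (Finset.mem_filter.1 hα).2
    omega
  have h1 : ∑ α ∈ rd.posRoots.filter (fun α => pairing x (rd.coroot α) < 0),
        (1 + pairing x (rd.coroot α)).natAbs +
      (rd.posRoots.filter (fun α => pairing x (rd.coroot α) < 0)).card =
      ∑ α ∈ rd.posRoots.filter (fun α => pairing x (rd.coroot α) < 0),
        (pairing x (rd.coroot α)).natAbs := by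
    rw [← Finset.sum_congr rfl hptw, Finset.sum_add_distrib, Finset.sum_const,
      smul_eq_mul, mul_one]
  rw [add_assoc, h1]
  rw [add_comm]
  exact Finset.sum_filter_add_sum_filter_not rd.posRoots
    (fun α => pairing x (rd.coroot α) < 0) (fun α => (pairing x (rd.coroot α)).natAbs)
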